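/- Let G be a simple signed graph on vertex set V and let U ⊆ V be such that G has no positive edge between U and V − U. If S is a fixed set of G[U] and S' is a fixed set of G − U − 𝒩_G(S), then S ∪ S' is a fixed set of G. Consequently fix(G[U]) ≤ fix(G). -/

import Mathlib

/-- `S` is a fixed set of the conjunctive network of the simple signed graph
(positive edges `pos`, negative edges `neg`) induced on the vertex set `U`. -/
def FixedOn {V : Type*} (pos neg : V → V → Prop) (U S : Set V) : Prop :=
  S ⊆ U ∧ ∀ v ∈ U,
    (v ∈ S ↔ (∀ u ∈ U, pos u v → u ∈ S) ∧ (∀ u ∈ U, neg u v → u ∉ S))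

/-- `S` is a fixed set of the whole simple signed graph. -/
def IsFixedSet {V : Type*} (pos neg : V → V → Prop) (S : Set V) : Prop :=
  ∀ v, v ∈ S ↔ (∀ u, pos u v → u ∈ S) ∧ (∀ u, neg u v → u ∉ S)

/-- `𝒩(S)`: the union of the neighborhood `N(S)` of `S` with all connected components
of the positive subgraph meeting `N(S)` (described via positive reachability). -/
def calN {V : Type*} (pos neg : V → V → Prop) (S : Set V) : Set V :=
  {v | ∃ w, (∃ u ∈ S, pos u w ∨ neg u w) ∧ Relation.ReflTransGen pos w v}

/-- Any induced signed subgraph has a fixed set: take a maximal set which is a union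
of positive components and has no internal negative edge. -/
lemma exists_fixedOn {V : Type*} [Fintype V] (pos neg : V → V → Prop)
    (hps : Symmetric pos) (hns : Symmetric neg) (hni : ∀ v, ¬ neg v v) (W : Set V) :
    ∃ S, FixedOn pos neg W S := by
  classical
  set Good : Set V → Prop := fun S =>
    S ⊆ W ∧ (∀ u ∈ S, ∀ v ∈ W, pos u v → v ∈ S) ∧ ∀ u ∈ S, ∀ v ∈ S, ¬ neg u v with hGood
  have hne : {S : Set V | Good S}.Nonempty := by
    refine ⟨∅, ?_, ?_, ?_⟩ <;> simp
  obtain ⟨S, hS, hmax⟩ :=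
    Set.Finite.exists_maximalFor id {S : Set V | Good S} (Set.toFinite _) hne
  obtain ⟨hSW, hScl, hSneg⟩ := hS
  refine ⟨S, hSW, fun v hv => ?_⟩
  constructor
  · intro hvS
    refine ⟨fun u hu hp => hScl v hvS u hu (hps hp), fun u _ hn huS => hSneg u huS v hvS hn⟩
  · rintro ⟨hp, hn⟩
    by_contra hvS
    -- S ∪ {v} is Good, contradicting maximality
    have hGood' : Good (insert v S) := by
      refine ⟨Set.insert_subset hv hSW, ?_, ?_⟩
      · rintro u (rfl | huS) x hx hpx
        · exact Or.inr (hp x hx (hps hpx))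
        · exact Or.inr (hScl u huS x hx hpx)
      · rintro u (rfl | huS) x (rfl | hxS) hnx
        · exact hni _ hnx
        · exact hn x (hSW hxS) (hns hnx) hxS
        · exact hn u (hSW huS) hnx huS
        · exact hSneg u huS x hxS hnx
    have := hmax hGood' (Set.subset_insert v S)
    simp only [id] at this
    exact hvS (this (Set.mem_insert v S))

lemma reach_mem {V : Type*} {pos : V → V → Prop} (hps : Symmetric pos) {U : Set V}
    (hU : ∀ u ∈ U, ∀ v, v ∉ U → ¬ pos u v) {w x : V}
    (h : Relation.ReflTransGen pos w x) (hw : w ∈ U) : x ∈ U := by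
  induction h with
  | refl => exact hw
  | tail _ h2 ih => by_contra hx; exact hU _ ih _ hx h2

lemma reach_not_mem {V : Type*} {pos : V → V → Prop} (hps : Symmetric pos) {U : Set V}
    (hU : ∀ u ∈ U, ∀ v, v ∉ U → ¬ pos u v) {w x : V}
    (h : Relation.ReflTransGen pos w x) (hw : w ∉ U) : x ∉ U := by
  induction h with
  | refl => exact hw
  | tail _ h2 ih => intro hx; exact hU _ hx _ ih (hps h2)

/-- If there is no positive edge between `U` and its complement, then fixed sets of
`G[U]` and of `G − U − 𝒩_G(S)` combine to fixed sets of `G`; consequently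
`fix(G[U]) ≤ fix(G)`. -/
theorem stmt5 {V : Type*} [Fintype V] (pos neg : V → V → Prop)
    (hps : Symmetric pos) (hns : Symmetric neg)
    (hpi : ∀ v, ¬ pos v v) (hni : ∀ v, ¬ neg v v)
    (hd : ∀ u v, pos u v → ¬ neg u v)
    (U : Set V) (hU : ∀ u ∈ U, ∀ v, v ∉ U → ¬ pos u v) :
    (∀ S S' : Set V, FixedOn pos neg U S →
        FixedOn pos neg (U ∪ calN pos neg S)ᶜ S' →
        IsFixedSet pos neg (S ∪ S')) ∧
    Set.ncard {S : Set V | FixedOn pos neg U S} ≤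
      Set.ncard {S : Set V | IsFixedSet pos neg S} := by
  classical
  have key : ∀ S S' : Set V, FixedOn pos neg U S →
      FixedOn pos neg (U ∪ calN pos neg S)ᶜ S' →
      IsFixedSet pos neg (S ∪ S') := by
    rintro S S' ⟨hSU, hSfix⟩ ⟨hS'W, hS'fix⟩
    have hS'notU : ∀ u ∈ S', u ∉ U := fun u hu h =>
      (hS'W hu) (Or.inl h)
    have hS'notN : ∀ u ∈ S', u ∉ calN pos neg S := fun u hu h =>
      (hS'W hu) (Or.inr h)
    intro v
    by_cases hvU : v ∈ U
    · have hvS' : v ∉ S' := fun h => hS'notU v h hvU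
      constructor
      · intro hv
        have hvS : v ∈ S := hv.resolve_right hvS'
        obtain ⟨hp, hn⟩ := (hSfix v hvU).mp hvS
        constructor
        · intro u hpu
          by_cases huU : u ∈ U
          · exact Or.inl (hp u huU hpu)
          · exact absurd (hps hpu) (hU v hvU u huU)
        · rintro u hnu (huS | huS')
          · exact hn u (hSU huS) hnu huS
          · exact hS'notN u huS' ⟨u, ⟨v, hvS, Or.inr (hns hnu)⟩, Relation.ReflTransGen.refl⟩
      · rintro ⟨hp, hn⟩
        exact Or.inl ((hSfix v hvU).mpr
          ⟨fun u hu h => (hp u h).resolve_right (fun h' => hS'notU u h' hu),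
            fun u _ h hu => hn u h (Or.inl hu)⟩)
    · by_cases hvN : v ∈ calN pos neg S
      · -- v is in 𝒩(S) but not in U : both sides are false
        have hvSS' : v ∉ S ∪ S' := by
          rintro (h | h)
          · exact hvU (hSU h)
          · exact hS'notN v h hvN
        refine iff_of_false hvSS' ?_
        rintro ⟨hp, hn⟩
        obtain ⟨w, ⟨s, hsS, hsw⟩, hwv⟩ := hvN
        have hwU : w ∉ U := fun hw => hvU (reach_mem hps hU hwv hw)
        have hsw' : neg s w := hsw.resolve_left (hU s (hSU hsS) w hwU)
        rcases Relation.ReflTransGen.cases_tail hwv with rfl | ⟨p, hwp, hpv⟩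
        · exact hn s hsw' (Or.inl hsS)
        · have hpN : p ∈ calN pos neg S := ⟨w, ⟨s, hsS, hsw⟩, hwp⟩
          have hpU : p ∉ U := reach_not_mem hps hU hwp hwU
          rcases hp p hpv with h | h
          · exact hpU (hSU h)
          · exact hS'notN p h hpN
      · have hvW : v ∈ (U ∪ calN pos neg S)ᶜ := fun h => h.elim hvU hvN
        have hvS : v ∉ S := fun h => hvU (hSU h)
        constructor
        · intro hv
          have hvS' : v ∈ S' := hv.resolve_left hvS
          obtain ⟨hp, hn⟩ := (hS'fix v hvW).mp hvS'
          constructor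
          · intro u hpu
            by_cases huW : u ∈ (U ∪ calN pos neg S)ᶜ
            · exact Or.inr (hp u huW hpu)
            · exfalso
              rcases not_not.mp (fun h => huW h) with huU | huN
              · exact hU u huU v hvU hpu
              · obtain ⟨w, hw, hwu⟩ := huN
                exact hvN ⟨w, hw, hwu.tail hpu⟩
          · rintro u hnu (huS | huS')
            · exact hvN ⟨v, ⟨u, huS, Or.inr hnu⟩, Relation.ReflTransGen.refl⟩
            · exact hn u (hS'W huS') hnu huS'
        · rintro ⟨hp, hn⟩
          refine Or.inr ((hS'fix v hvW).mpr ⟨fun u hu h => ?_, fun u hu h hu' => hn u h (Or.inr hu')⟩)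
          rcases hp u h with h' | h'
          · exact absurd (Or.inl (hSU h')) hu
          · exact h'
  refine ⟨key, ?_⟩
  set ext : Set V → Set V := fun S =>
    Classical.choose (exists_fixedOn pos neg hps hns hni (U ∪ calN pos neg S)ᶜ) with hext
  have hextspec : ∀ S, FixedOn pos neg (U ∪ calN pos neg S)ᶜ (ext S) := fun S =>
    Classical.choose_spec (exists_fixedOn pos neg hps hns hni (U ∪ calN pos neg S)ᶜ)
  have hinter : ∀ S ∈ {S : Set V | FixedOn pos neg U S}, (S ∪ ext S) ∩ U = S := by
    intro S hS
    ext x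
    simp only [Set.mem_inter_iff, Set.mem_union]
    constructor
    · rintro ⟨h | h, hxU⟩
      · exact h
      · exact absurd (Or.inl hxU) ((hextspec S).1 h)
    · intro h; exact ⟨Or.inl h, hS.1 h⟩
  refine Set.ncard_le_ncard_of_injOn (fun S => S ∪ ext S) ?_ ?_ (Set.toFinite _)
  · intro S hS
    exact key S (ext S) hS (hextspec S)
  · intro S₁ h₁ S₂ h₂ h
    rw [← hinter S₁ h₁, ← hinter S₂ h₂]
    -- note ext depends on S, so must be careful: from h, S₁ ∪ ext S₁ = S₂ ∪ ext S₂
    simp only at h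
    rw [h]
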